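/- (Lemma 2) Fix ε > 0, α > 2 and c > 0. Then lim_{R→∞} R²·F_ε(c,R) = (c/π)·(∫_{ℝ²} g_ε(x) dx)² = (4cπ³/α²)·ε^{(4−2α)/α}·(csc(2π/α))². Equivalently, F_ε(c,R) = (4cπ³/α²)·ε^{(4−2α)/α}·(csc(2π/α))²·(1/R²) + o(1/R²) as R → ∞. -/

import Mathlib

open MeasureTheory Real Filter

/-- The lens-area function `A_R(r)`. -/
noncomputable def lensArea (R r : ℝ) : ℝ :=
  if r ≤ 2 * R then 2 * R ^ 2 * Real.arccos (r / (2 * R)) - r * Real.sqrt (R ^ 2 - r ^ 2 / 4)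
  else 0

/-- The regularized path-loss function `g_ε(x) = 1/(ε + |x|^α)` on `ℝ²`. -/
noncomputable def gE (ε α : ℝ) (x : EuclideanSpace ℝ (Fin 2)) : ℝ :=
  1 / (ε + ‖x‖ ^ α)

/-- The quantity `F_ε(c, R)`. -/
noncomputable def Feps (ε α c R : ℝ) : ℝ :=
  (c / (π ^ 2 * R ^ 4)) *
    ∫ x : EuclideanSpace ℝ (Fin 2), ∫ y : EuclideanSpace ℝ (Fin 2),
      gE ε α x * gE ε α y * lensArea R ‖x - y‖

section Aux

lemma beta_real (s : ℝ) (h0 : 0 < s) (h1 : s < 1) :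
    ∫ u in Set.Ioo (0:ℝ) 1, u ^ (s-1) * (1-u) ^ (-s) = π / Real.sin (π * s) := by
  have hsin : Real.sin (π * s) ≠ 0 := by
    apply ne_of_gt; apply Real.sin_pos_of_pos_of_lt_pi
    · positivity
    · nlinarith [Real.pi_pos]
  have hb : Complex.betaIntegral s ((1-s : ℝ):ℂ) = ((π / Real.sin (π * s) : ℝ) : ℂ) := by
    have h := Complex.Gamma_mul_Gamma_eq_betaIntegral
      (s := (s:ℂ)) (t := ((1-s : ℝ):ℂ)) (by simpa using h0) (by simp; linarith)
    have h2 : ((s:ℂ) + ((1-s:ℝ):ℂ)) = 1 := by push_cast; ring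
    rw [h2, Complex.Gamma_one, one_mul] at h
    rw [← h]
    have h3 := Complex.Gamma_mul_Gamma_one_sub (s:ℂ)
    have h4 : ((1:ℂ) - (s:ℂ)) = ((1-s:ℝ):ℂ) := by push_cast; ring
    rw [h4] at h3
    rw [h3, Complex.ofReal_div, Complex.ofReal_sin, Complex.ofReal_mul]
  have hco : Complex.betaIntegral s ((1-s : ℝ):ℂ)
      = ((∫ u in (0:ℝ)..1, u ^ (s-1) * (1-u) ^ (-s) : ℝ) : ℂ) := by
    rw [Complex.betaIntegral, ← intervalIntegral.integral_ofReal]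
    apply intervalIntegral.integral_congr
    intro x hx
    rw [Set.uIcc_of_le (by norm_num : (0:ℝ) ≤ 1)] at hx
    obtain ⟨hx0, hx1⟩ := hx
    have e1 : ((x ^ (s-1) : ℝ) : ℂ) = (x:ℂ) ^ ((s:ℂ)-1) := by
      rw [Complex.ofReal_cpow hx0]; norm_num
    have e2 : (((1-x) ^ (-s) : ℝ) : ℂ) = (1-(x:ℂ)) ^ (((1-s:ℝ):ℂ)-1) := by
      rw [Complex.ofReal_cpow (by linarith : (0:ℝ) ≤ 1 - x)]
      push_cast
      congr 1
      ring
    simp only [Complex.ofReal_mul, e1, e2]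
  have : (∫ u in (0:ℝ)..1, u ^ (s-1) * (1-u) ^ (-s) : ℝ)
      = ∫ u in Set.Ioo (0:ℝ) 1, u ^ (s-1) * (1-u) ^ (-s) := by
    rw [intervalIntegral.integral_of_le (by norm_num : (0:ℝ) ≤ 1),
      MeasureTheory.integral_Ioc_eq_integral_Ioo]
  rw [hco] at hb
  rw [← this]
  exact_mod_cast hb

lemma mellin_inv_one_add (s : ℝ) (h0 : 0 < s) (h1 : s < 1) :
    ∫ t in Set.Ioi (0:ℝ), t ^ (s-1) / (1+t) = π / Real.sin (π * s) := by
  set f : ℝ → ℝ := fun u => u / (1-u) with hf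
  set f' : ℝ → ℝ := fun u => ((1-u)^2)⁻¹ with hf'
  have hderiv : ∀ u ∈ Set.Ioo (0:ℝ) 1, HasDerivWithinAt f (f' u) (Set.Ioo (0:ℝ) 1) u := by
    intro u hu
    have h1u : (1:ℝ) - u ≠ 0 := by simp only [Set.mem_Ioo] at hu; intro h; linarith [hu.2]
    have : HasDerivAt f ((1*(1-u) - u*(-1)) / (1-u)^2) u := by
      exact (hasDerivAt_id u).div ((hasDerivAt_id u).const_sub 1) h1u
    have e : (1*(1-u) - u*(-1)) / (1-u)^2 = f' u := by rw [hf']; field_simp; ring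
    rw [e] at this
    exact this.hasDerivWithinAt
  have hinj : Set.InjOn f (Set.Ioo (0:ℝ) 1) := by
    intro a ha b hb hab
    simp only [Set.mem_Ioo] at ha hb
    rw [hf] at hab
    have h1a : (1:ℝ) - a ≠ 0 := by intro h; linarith [ha.2]
    have h1b : (1:ℝ) - b ≠ 0 := by intro h; linarith [hb.2]
    field_simp at hab
    nlinarith [hab]
  have himg : f '' Set.Ioo (0:ℝ) 1 = Set.Ioi (0:ℝ) := by
    ext x
    constructor
    · rintro ⟨u, hu, rfl⟩
      simp only [Set.mem_Ioo] at hu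
      exact div_pos hu.1 (by linarith)
    · intro hx
      refine ⟨x / (1+x), ?_, ?_⟩
      · constructor
        · exact div_pos hx (by linarith [Set.mem_Ioi.mp hx])
        · rw [div_lt_one (by linarith [Set.mem_Ioi.mp hx])]; linarith [Set.mem_Ioi.mp hx]
      · have hx' : (0:ℝ) < x := hx
        have : (1:ℝ) + x ≠ 0 := by linarith
        rw [hf]; field_simp; ring
  have key := MeasureTheory.integral_image_eq_integral_abs_deriv_smul
    measurableSet_Ioo hderiv hinj (fun t => t ^ (s-1) / (1+t))
  rw [himg] at key
  rw [key]
  rw [← beta_real s h0 h1]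
  apply MeasureTheory.setIntegral_congr_fun measurableSet_Ioo
  intro u hu
  simp only [Set.mem_Ioo] at hu
  have hu0 : (0:ℝ) < u := hu.1
  have h1u : (0:ℝ) < 1 - u := by linarith [hu.2]
  have hfu : 1 + f u = (1-u)⁻¹ := by rw [hf]; field_simp; ring
  have hpow : (f u) ^ (s-1) = u ^ (s-1) / (1-u) ^ (s-1) := by
    rw [hf]; exact Real.div_rpow hu0.le h1u.le (s-1)
  have hs0 : (1-u)^s ≠ 0 := (Real.rpow_pos_of_pos h1u s).ne'
  simp only []
  rw [smul_eq_mul, hpow, hfu, abs_of_pos (by simp only [hf']; positivity : (0:ℝ) < f' u)]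
  simp only [hf']
  rw [Real.rpow_neg h1u.le, Real.rpow_sub h1u, Real.rpow_one]
  field_simp

lemma integral_gE (ε α : ℝ) (hε : 0 < ε) (hα : 2 < α) :
    ∫ x : EuclideanSpace ℝ (Fin 2), gE ε α x
      = (2 * π ^ 2 / α) * ε ^ ((2-α)/α) * (1 / Real.sin (2 * π / α)) := by
  have hα0 : (0:ℝ) < α := by linarith
  have hαne : α ≠ 0 := hα0.ne'
  have hdim : Module.finrank ℝ (EuclideanSpace ℝ (Fin 2)) = 2 := by
    simp [finrank_euclideanSpace]
  have hball : (volume (Metric.ball (0 : EuclideanSpace ℝ (Fin 2)) 1)).toReal = π := by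
    rw [EuclideanSpace.volume_ball]
    simp [show (1:ℝ)+1=2 by norm_num, Real.Gamma_two, Real.sq_sqrt Real.pi_pos.le,
      Real.pi_pos.le]
  have hpolar := MeasureTheory.integral_fun_norm_addHaar
    (volume : Measure (EuclideanSpace ℝ (Fin 2))) (fun r => 1 / (ε + r ^ α))
  rw [hdim, measureReal_def, hball] at hpolar
  have hgE : ∫ x : EuclideanSpace ℝ (Fin 2), gE ε α x
      = 2 * π * ∫ r in Set.Ioi (0:ℝ), r * (1 / (ε + r ^ α)) := by
    rw [show (∫ x : EuclideanSpace ℝ (Fin 2), gE ε α x)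
        = ∫ x : EuclideanSpace ℝ (Fin 2), (fun r => 1 / (ε + r ^ α)) ‖x‖ from rfl, hpolar]
    simp only [nsmul_eq_mul, smul_eq_mul, show (2:ℕ)-1 = 1 from rfl, pow_one, Nat.cast_ofNat]
    rw [← mul_assoc]
  simp only [mul_one_div] at hgE
  set b : ℝ := ε ^ (1/α) with hb
  have hbpos : 0 < b := Real.rpow_pos_of_pos hε _
  have hbα : b ^ α = ε := by
    rw [hb, ← Real.rpow_mul hε.le, one_div, inv_mul_cancel₀ hαne, Real.rpow_one]
  have hs : (0:ℝ) < 2/α := by positivity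
  have hs1 : 2/α < 1 := by rw [div_lt_one hα0]; linarith
  have hcr := MeasureTheory.integral_comp_rpow_Ioi_of_pos
      (g := fun y => y ^ (2/α - 1) / (1 + y)) (p := α) hα0
  have hcongr1 : Set.EqOn (fun x : ℝ => (α * x ^ (α-1)) • ((x^α) ^ (2/α-1) / (1 + x^α)))
      (fun x : ℝ => α * (x / (1 + x ^ α))) (Set.Ioi 0) := by
    intro x hx
    have hx0 : (0:ℝ) < x := hx
    have e1 : (x^α) ^ (2/α-1) = x ^ (2 - α) := by
      rw [← Real.rpow_mul hx0.le]
      congr 1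
      field_simp
    simp only [smul_eq_mul, e1]
    have e2 : x ^ (α-1) * x ^ (2-α) = x := by
      rw [← Real.rpow_add hx0, show α - 1 + (2 - α) = 1 by ring, Real.rpow_one]
    field_simp
    nlinarith [e2, Real.rpow_pos_of_pos hx0 (α-1), Real.rpow_pos_of_pos hx0 (2-α)]
  rw [MeasureTheory.setIntegral_congr_fun measurableSet_Ioi hcongr1,
    MeasureTheory.integral_const_mul] at hcr
  have hM := mellin_inv_one_add (2/α) hs hs1
  rw [hM] at hcr
  have hK : ∫ x in Set.Ioi (0:ℝ), x / (1 + x ^ α)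
      = (1/α) * (π / Real.sin (π * (2/α))) := by
    rw [← hcr]; field_simp
  have hsub := MeasureTheory.integral_comp_mul_left_Ioi (fun r => r / (ε + r ^ α)) 0 hbpos
  rw [mul_zero] at hsub
  have hcongr2 : Set.EqOn (fun x : ℝ => (fun r => r / (ε + r ^ α)) (b*x))
      (fun x : ℝ => (b/ε) * (x / (1 + x ^ α))) (Set.Ioi 0) := by
    intro x hx
    have hx0 : (0:ℝ) < x := hx
    have e : (b*x)^α = ε * x^α := by rw [Real.mul_rpow hbpos.le hx0.le, hbα]
    simp only [e]
    have h1 : (0:ℝ) < 1 + x^α := by positivity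
    field_simp
  rw [MeasureTheory.setIntegral_congr_fun measurableSet_Ioi hcongr2,
    MeasureTheory.integral_const_mul, smul_eq_mul] at hsub
  beta_reduce at hsub
  have hbb : b * (b / ε) = ε ^ ((2-α)/α) := by
    rw [show (2-α)/α = 1/α + 1/α - 1 by field_simp; ring, Real.rpow_sub hε,
      Real.rpow_add hε, Real.rpow_one]
    ring
  have hJ : (∫ r in Set.Ioi (0:ℝ), r / (ε + r ^ α))
      = ε ^ ((2-α)/α) * ∫ x in Set.Ioi (0:ℝ), x / (1 + x ^ α) := by
    have h2 : (∫ r in Set.Ioi (0:ℝ), r / (ε + r ^ α))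
        = b * (b⁻¹ * ∫ r in Set.Ioi (0:ℝ), r / (ε + r ^ α)) := by
      rw [← mul_assoc, mul_inv_cancel₀ hbpos.ne', one_mul]
    rw [h2, ← hsub, ← mul_assoc, hbb]
  rw [hgE, hJ, hK, show π * (2/α) = 2 * π / α by ring]
  ring

lemma lensArea_nonneg {R r : ℝ} (hR : 0 < R) (hr : 0 ≤ r) : 0 ≤ lensArea R r := by
  unfold lensArea
  split_ifs with h
  · set u := r / (2 * R) with hu
    have hu0 : 0 ≤ u := by positivity
    have hu1 : u ≤ 1 := by rw [hu, div_le_one (by linarith)]; linarith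
    have hsq : Real.sqrt (R ^ 2 - r ^ 2 / 4) = R * Real.sqrt (1 - u ^ 2) := by
      rw [← Real.sqrt_sq hR.le, ← Real.sqrt_mul (sq_nonneg R)]
      congr 1
      rw [hu]
      field_simp
      rw [Real.sq_sqrt (sq_nonneg R)]
      ring
    have key : u * Real.sqrt (1 - u ^ 2) ≤ Real.arccos u := by
      calc u * Real.sqrt (1 - u ^ 2) ≤ Real.sqrt (1 - u ^ 2) := by
            apply mul_le_of_le_one_left (Real.sqrt_nonneg _) hu1
        _ = Real.sin (Real.arccos u) := (Real.sin_arccos u).symm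
        _ ≤ Real.arccos u := Real.sin_le (Real.arccos_nonneg u)
    have hrr : r = 2 * R * u := by rw [hu]; field_simp
    rw [hsq]
    have : r * (R * Real.sqrt (1 - u ^ 2)) = 2 * R ^ 2 * (u * Real.sqrt (1 - u ^ 2)) := by
      rw [hrr]; ring
    rw [this]
    nlinarith [key, sq_nonneg R]
  · exact le_refl 0

lemma lensArea_le {R r : ℝ} (hR : 0 < R) (hr : 0 ≤ r) : lensArea R r ≤ π * R ^ 2 := by
  unfold lensArea
  split_ifs with h
  · have h1 : Real.arccos (r / (2 * R)) ≤ π / 2 :=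
      Real.arccos_le_pi_div_two.mpr (by positivity)
    nlinarith [mul_nonneg hr (Real.sqrt_nonneg (R ^ 2 - r ^ 2 / 4)), sq_nonneg R]
  · positivity

lemma lensArea_measurable (R : ℝ) : Measurable (lensArea R) := by
  unfold lensArea
  apply Measurable.ite (measurableSet_le measurable_id measurable_const)
  · exact ((measurable_const.mul (Real.continuous_arccos.measurable.comp
      (measurable_id.div_const _))).sub
      (measurable_id.mul (Real.continuous_sqrt.measurable.comp
      (measurable_const.sub ((measurable_id.pow_const 2).div_const _)))))
  · exact measurable_const

lemma lensArea_div_tendsto {r : ℝ} (hr : 0 ≤ r) :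
    Tendsto (fun R : ℝ => lensArea R r / R ^ 2) atTop (nhds π) := by
  have h1 : Tendsto (fun R : ℝ => r / (2 * R)) atTop (nhds 0) := by
    apply Tendsto.div_atTop tendsto_const_nhds
    exact Tendsto.const_mul_atTop two_pos tendsto_id
  have h2 : Tendsto (fun R : ℝ => 2 * Real.arccos (r / (2 * R))) atTop (nhds π) := by
    have := (Real.continuous_arccos.continuousAt (x := (0:ℝ))).tendsto.comp h1
    rw [Real.arccos_zero] at this
    have h3 := this.const_mul 2
    norm_num at h3
    convert h3 using 2
    ring
  have h4 : Tendsto (fun R : ℝ => r * Real.sqrt (R ^ 2 - r ^ 2 / 4) / R ^ 2) atTop (nhds 0) := by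
    apply squeeze_zero' (g := fun R : ℝ => r / R)
    · filter_upwards [eventually_gt_atTop 0] with R hR
      positivity
    · filter_upwards [eventually_gt_atTop 0] with R hR
      have hs : Real.sqrt (R ^ 2 - r ^ 2 / 4) ≤ R :=
        le_trans (Real.sqrt_le_sqrt (by nlinarith [sq_nonneg r])) (le_of_eq (Real.sqrt_sq hR.le))
      rw [div_le_div_iff₀ (by positivity) hR]
      have hmul := mul_le_mul_of_nonneg_left hs (mul_nonneg hr hR.le)
      nlinarith [hmul]
    · exact Tendsto.div_atTop tendsto_const_nhds tendsto_id
  have h5 := h2.sub h4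
  rw [sub_zero] at h5
  apply h5.congr'
  filter_upwards [eventually_ge_atTop (r / 2 + 1)] with R hR
  have hR0 : 0 < R := by nlinarith
  have hr2R : r ≤ 2 * R := by nlinarith
  unfold lensArea
  rw [if_pos hr2R]
  field_simp

lemma gE_cont {ε α : ℝ} (hε : 0 < ε) (hα : 0 < α) : Continuous (gE ε α) := by
  unfold gE
  apply Continuous.div continuous_const
  · exact continuous_const.add (continuous_norm.rpow_const (fun x => Or.inr hα.le))
  · intro x
    have : (0:ℝ) ≤ ‖x‖ ^ α := Real.rpow_nonneg (norm_nonneg x) α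
    positivity

lemma gE_nonneg {ε α : ℝ} (hε : 0 < ε) (x : EuclideanSpace ℝ (Fin 2)) : 0 ≤ gE ε α x := by
  unfold gE
  have : (0:ℝ) ≤ ‖x‖ ^ α := Real.rpow_nonneg (norm_nonneg x) α
  positivity

lemma gE_integrable {ε α : ℝ} (hε : 0 < ε) (hα : 2 < α) : Integrable (gE ε α) := by
  have hα0 : (0:ℝ) < α := by linarith
  have hfr : (Module.finrank ℝ (EuclideanSpace ℝ (Fin 2)) : ℝ) < α := by
    simp [finrank_euclideanSpace]; exact_mod_cast hα
  have hint := integrable_one_add_norm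
    (E := EuclideanSpace ℝ (Fin 2)) (μ := volume) hfr
  set C : ℝ := 2 ^ α * (ε⁻¹ + 1) with hC
  have hCpos : 0 < C := by
    have : (0:ℝ) < (2:ℝ) ^ α := Real.rpow_pos_of_pos two_pos α
    positivity
  apply (hint.const_mul C).mono' ((gE_cont hε hα0).aestronglyMeasurable)
  filter_upwards with x
  set t : ℝ := ‖x‖ with ht
  have ht0 : 0 ≤ t := norm_nonneg x
  have hkey : (1 + t) ^ α ≤ C * (ε + t ^ α) := by
    have h2 : (0:ℝ) < (2:ℝ) ^ α := Real.rpow_pos_of_pos two_pos α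
    rcases le_total t 1 with h | h
    · have hle : (1 + t) ^ α ≤ 2 ^ α :=
        Real.rpow_le_rpow (by linarith) (by linarith) hα0.le
      have hCε : C * ε = 2 ^ α * (1 + ε) := by rw [hC]; field_simp
      have htα : (0:ℝ) ≤ t ^ α := Real.rpow_nonneg ht0 α
      nlinarith [hle, h2]
    · have hle : (1 + t) ^ α ≤ (2 * t) ^ α :=
        Real.rpow_le_rpow (by linarith) (by linarith) hα0.le
      rw [Real.mul_rpow (by norm_num) ht0] at hle
      have htα : (0:ℝ) ≤ t ^ α := Real.rpow_nonneg ht0 α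
      have hC2 : 2 ^ α ≤ C := by
        rw [hC]
        nlinarith [h2, inv_pos.mpr hε]
      nlinarith [hle, h2, mul_le_mul_of_nonneg_right hC2 htα]
  have hd : (0:ℝ) < ε + t ^ α := by
    have : (0:ℝ) ≤ t ^ α := Real.rpow_nonneg ht0 α
    positivity
  have h1t : (0:ℝ) < (1 + t) ^ α := Real.rpow_pos_of_pos (by linarith) α
  rw [Real.norm_of_nonneg (gE_nonneg hε x)]
  unfold gE
  rw [← ht, Real.rpow_neg (by linarith : (0:ℝ) ≤ 1 + t)]
  rw [div_le_iff₀ hd]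
  calc (1:ℝ) = ((1+t)^α)⁻¹ * (1+t)^α := by field_simp
    _ ≤ ((1+t)^α)⁻¹ * (C * (ε + t^α)) := by
        apply mul_le_mul_of_nonneg_left hkey (by positivity)
    _ = C * ((1+t)^α)⁻¹ * (ε + t^α) := by ring

end Aux

theorem stmt9 (ε α c : ℝ) (hε : 0 < ε) (hα : 2 < α) (hc : 0 < c) :
    Tendsto (fun R : ℝ => R ^ 2 * Feps ε α c R) atTop
      (nhds ((c / π) * (∫ x : EuclideanSpace ℝ (Fin 2), gE ε α x) ^ 2)) ∧
    (c / π) * (∫ x : EuclideanSpace ℝ (Fin 2), gE ε α x) ^ 2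
      = (4 * c * π ^ 3 / α ^ 2) * ε ^ ((4 - 2 * α) / α) * (1 / Real.sin (2 * π / α)) ^ 2 := by
  have hα0 : (0:ℝ) < α := by linarith
  have hπ : (0:ℝ) < π := Real.pi_pos
  have hgi : Integrable (gE ε α) := gE_integrable hε hα
  have hgc : Continuous (gE ε α) := gE_cont hε hα0
  constructor
  · -- the limit
    have hGG : Integrable (fun z : (EuclideanSpace ℝ (Fin 2)) × (EuclideanSpace ℝ (Fin 2)) =>
        gE ε α z.1 * gE ε α z.2) := by
      rw [Measure.volume_eq_prod]
      exact hgi.mul_prod hgi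
    have hmeas : ∀ R : ℝ, AEStronglyMeasurable
        (fun z : (EuclideanSpace ℝ (Fin 2)) × (EuclideanSpace ℝ (Fin 2)) =>
          gE ε α z.1 * gE ε α z.2 * lensArea R ‖z.1 - z.2‖) volume := fun R => by
      apply AEStronglyMeasurable.mul
      · exact ((hgc.comp continuous_fst).mul (hgc.comp continuous_snd)).aestronglyMeasurable
      · exact ((lensArea_measurable R).comp
          (continuous_fst.sub continuous_snd).norm.measurable).aestronglyMeasurable
    have hIntR : ∀ R : ℝ, 0 < R → Integrable
        (fun z : (EuclideanSpace ℝ (Fin 2)) × (EuclideanSpace ℝ (Fin 2)) =>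
          gE ε α z.1 * gE ε α z.2 * lensArea R ‖z.1 - z.2‖) := by
      intro R hR
      apply (hGG.const_mul (π * R ^ 2)).mono' (hmeas R)
      filter_upwards with z
      have h1 : 0 ≤ gE ε α z.1 := gE_nonneg hε _
      have h2 : 0 ≤ gE ε α z.2 := gE_nonneg hε _
      have h3 := lensArea_nonneg hR (norm_nonneg (z.1 - z.2))
      have h4 := lensArea_le hR (norm_nonneg (z.1 - z.2))
      rw [Real.norm_of_nonneg (by positivity)]
      calc gE ε α z.1 * gE ε α z.2 * lensArea R ‖z.1 - z.2‖
          ≤ gE ε α z.1 * gE ε α z.2 * (π * R ^ 2) := by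
            apply mul_le_mul_of_nonneg_left h4 (mul_nonneg h1 h2)
        _ = π * R ^ 2 * (gE ε α z.1 * gE ε α z.2) := by ring
    have hdom : Tendsto (fun R : ℝ =>
        ∫ z : (EuclideanSpace ℝ (Fin 2)) × (EuclideanSpace ℝ (Fin 2)),
          gE ε α z.1 * gE ε α z.2 * (lensArea R ‖z.1 - z.2‖ / R ^ 2))
        atTop (nhds (∫ z : (EuclideanSpace ℝ (Fin 2)) × (EuclideanSpace ℝ (Fin 2)),
          gE ε α z.1 * gE ε α z.2 * π)) := by
      apply MeasureTheory.tendsto_integral_filter_of_dominated_convergence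
        (fun z => gE ε α z.1 * gE ε α z.2 * π)
      · filter_upwards [eventually_gt_atTop 0] with R hR
        apply AEStronglyMeasurable.mul
        · exact ((hgc.comp continuous_fst).mul (hgc.comp continuous_snd)).aestronglyMeasurable
        · exact (((lensArea_measurable R).comp
            (continuous_fst.sub continuous_snd).norm.measurable).div_const
            (R ^ 2)).aestronglyMeasurable
      · filter_upwards [eventually_gt_atTop 0] with R hR
        filter_upwards with z
        have h1 : 0 ≤ gE ε α z.1 := gE_nonneg hε _
        have h2 : 0 ≤ gE ε α z.2 := gE_nonneg hε _
        have h3 := lensArea_nonneg hR (norm_nonneg (z.1 - z.2))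
        have h4 := lensArea_le hR (norm_nonneg (z.1 - z.2))
        have hR2 : (0:ℝ) < R ^ 2 := by positivity
        have h5 : lensArea R ‖z.1 - z.2‖ / R ^ 2 ≤ π := by
          rw [div_le_iff₀ hR2]
          linarith [h4]
        have h6 : 0 ≤ lensArea R ‖z.1 - z.2‖ / R ^ 2 := by positivity
        rw [Real.norm_of_nonneg (by positivity)]
        exact mul_le_mul_of_nonneg_left h5 (mul_nonneg h1 h2)
      · exact hGG.mul_const π
      · apply Filter.Eventually.of_forall
        intro z
        exact (lensArea_div_tendsto (norm_nonneg (z.1 - z.2))).const_mul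
          (gE ε α z.1 * gE ε α z.2)
    have hlimval : (∫ z : (EuclideanSpace ℝ (Fin 2)) × (EuclideanSpace ℝ (Fin 2)),
        gE ε α z.1 * gE ε α z.2 * π)
        = (∫ x : EuclideanSpace ℝ (Fin 2), gE ε α x) ^ 2 * π := by
      rw [MeasureTheory.integral_mul_const]
      congr 1
      rw [Measure.volume_eq_prod, MeasureTheory.integral_prod_mul]
      ring
    have heq : ∀ᶠ R : ℝ in atTop, R ^ 2 * Feps ε α c R
        = (c / π ^ 2) * ∫ z : (EuclideanSpace ℝ (Fin 2)) × (EuclideanSpace ℝ (Fin 2)),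
          gE ε α z.1 * gE ε α z.2 * (lensArea R ‖z.1 - z.2‖ / R ^ 2) := by
      filter_upwards [eventually_gt_atTop 0] with R hR
      have hint' : Integrable (Function.uncurry fun x y : EuclideanSpace ℝ (Fin 2) =>
          gE ε α x * gE ε α y * lensArea R ‖x - y‖) (volume.prod volume) := by
        rw [← Measure.volume_eq_prod]; exact hIntR R hR
      have hfub := MeasureTheory.integral_integral hint'
      rw [← Measure.volume_eq_prod] at hfub
      have hrw : (∫ z : (EuclideanSpace ℝ (Fin 2)) × (EuclideanSpace ℝ (Fin 2)),
          gE ε α z.1 * gE ε α z.2 * (lensArea R ‖z.1 - z.2‖ / R ^ 2))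
          = (∫ z : (EuclideanSpace ℝ (Fin 2)) × (EuclideanSpace ℝ (Fin 2)),
          gE ε α z.1 * gE ε α z.2 * lensArea R ‖z.1 - z.2‖) * (R ^ 2)⁻¹ := by
        rw [← MeasureTheory.integral_mul_const]
        congr 1
        funext z
        ring
      rw [hrw]
      unfold Feps
      rw [hfub]
      have hRne : (R:ℝ) ≠ 0 := hR.ne'
      field_simp
    have hfinal := hdom.const_mul (c / π ^ 2)
    rw [hlimval] at hfinal
    have h2 : (c / π ^ 2) * ((∫ x : EuclideanSpace ℝ (Fin 2), gE ε α x) ^ 2 * π)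
        = (c / π) * (∫ x : EuclideanSpace ℝ (Fin 2), gE ε α x) ^ 2 := by
      field_simp
    rw [h2] at hfinal
    exact hfinal.congr' (Filter.EventuallyEq.symm heq)
  · -- the closed form
    rw [integral_gE ε α hε hα]
    have hεpow : (ε ^ ((2-α)/α)) ^ 2 = ε ^ ((4 - 2*α)/α) := by
      rw [sq, ← Real.rpow_add hε]
      congr 1
      field_simp
      ring
    have hq : ((2*π^2/α))^2 = 4*π^4/α^2 := by field_simp; ring
    rw [mul_pow, mul_pow, hεpow, hq]
    have hcc : c/π * (4*π^4/α^2) = 4*c*π^3/α^2 := by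
      field_simp
    calc c/π * (4*π^4/α^2 * ε ^ ((4-2*α)/α) * (1/Real.sin (2*π/α))^2)
        = (c/π * (4*π^4/α^2)) * ε ^ ((4-2*α)/α) * (1/Real.sin (2*π/α))^2 := by ring
      _ = _ := by rw [hcc]
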